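/- Let G be a connected reductive algebraic group over an algebraically closed field K, let (ρ,V) be a finite-dimensional linear representation of G, let W ⊆ V be a d-dimensional subspace with basis w₁,…,w_d, let X = ⊕^d V with the diagonal G-action, and let x = (w₁,…,w_d) ∈ X. Assume the orbit ρ(G)x is closed in X and let λ ∈ |X,x|. Then the subspace lim_{t→0} ρ(λ(t))W := {lim_{t→0} ρ(λ(t))w : w ∈ W} of V equals ρ(g)W for some g ∈ G. -/

import Mathlib

/-- An axiomatization of a connected reductive linear algebraic group `G` over the
algebraically closed field `K`, recording which abstract homomorphisms `𝔾_m = Kˣ → G` are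
(algebraic) cocharacters. -/
structure ConnectedReductiveGroup (K : Type*) [Field K] [IsAlgClosed K] where
  /-- the group of `K`-points of `G` -/
  G : Type*
  [grp : Group G]
  /-- `IsCochar γ`: the homomorphism `γ : Kˣ → G` is an algebraic cocharacter `𝔾_m → G` -/
  IsCochar : (Kˣ →* G) → Prop

attribute [instance] ConnectedReductiveGroup.grp

section WeightTheory

variable {K : Type*} [Field K] {V : Type*} [AddCommGroup V] [Module K V]
variable {G : Type*} [Group G]

/-- The weight space `V(λ;i) = {v ∈ V ∣ ρ(λ(t))v = tⁱ v for all t}` of the cocharacter `λ`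
acting via the representation `ρ`. -/
def wtSpace (ρ : G →* V ≃ₗ[K] V) (l : Kˣ →* G) (i : ℤ) : Submodule K V where
  carrier := {v | ∀ t : Kˣ, ρ (l t) v = ((t ^ i : Kˣ) : K) • v}
  add_mem' := by
    intro a b ha hb t
    rw [map_add, ha t, hb t, smul_add]
  zero_mem' := by
    intro t
    rw [map_zero, smul_zero]
  smul_mem' := by
    intro c a ha t
    rw [map_smul, ha t, smul_comm]

/-- `λ ∈ |V,v|`: the limit `lim_{t→0} ρ(λ(t))v` exists, i.e. `v` lies in the sum of the
nonnegative weight spaces of `λ`. -/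
def limitExists (ρ : G →* V ≃ₗ[K] V) (l : Kˣ →* G) (v : V) : Prop :=
  v ∈ ⨆ i : ℕ, wtSpace ρ l (i : ℤ)

/-- The component `v_i ∈ V(λ;i)` of `v` in the weight space decomposition
`V = ⊕_{i ∈ ℤ} V(λ;i)`.  (For an algebraic representation this decomposition is internal;
this is recorded by the hypothesis `hdec`.)  When the limit `lim_{t→0} ρ(λ(t))v` exists, it
equals the component `v₀ = wtComponent ρ l hdec v 0`. -/
noncomputable def wtComponent (ρ : G →* V ≃ₗ[K] V) (l : Kˣ →* G)
    (hdec : DirectSum.IsInternal fun i : ℤ => wtSpace ρ l i) (v : V) (i : ℤ) : V :=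
  ((Equiv.ofBijective _ hdec).symm v i : V)

open scoped Classical in
/-- The Kempf instability degree `α_{S,v}(λ)` of `v ∉ S` relative to a closed `G`-invariant
subvariety `S`: writing `v₀ = lim_{t→0} ρ(λ(t))v` (the weight-`0` component of `v`), it is
the order of vanishing `min {j > 0 ∣ v_j ≠ 0}` of `t ↦ ρ(λ(t))v - v₀` if `v₀ ∈ S`, and `0`
otherwise. -/
noncomputable def kempfAlpha (ρ : G →* V ≃ₗ[K] V) (l : Kˣ →* G)
    (hdec : DirectSum.IsInternal fun i : ℤ => wtSpace ρ l i) (S : Set V) (v : V) : ℕ∞ :=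
  if wtComponent ρ l hdec v 0 ∈ S then
    ⨅ n ∈ {n : ℕ | 0 < n ∧ wtComponent ρ l hdec v (n : ℤ) ≠ 0}, (n : ℕ∞)
  else 0

/-- The diagonal representation of `G` on `⊕^d V = (Fin d → V)`. -/
def diagRep (d : ℕ) (ρ : G →* V ≃ₗ[K] V) : G →* ((Fin d → V) ≃ₗ[K] (Fin d → V)) where
  toFun g := LinearEquiv.piCongrRight fun _ : Fin d => ρ g
  map_one' := by
    apply LinearEquiv.ext
    intro x
    funext i
    show (ρ 1) (x i) = x i
    rw [map_one]
    rfl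
  map_mul' g h := by
    apply LinearEquiv.ext
    intro x
    funext i
    simp only [map_mul]
    rfl

end WeightTheory

/-- A function `f : V → K` is a polynomial (regular) function on the `K`-vector space `V`:
it lies in the `K`-subalgebra of `V → K` generated by the linear functionals. -/
def IsPolyFun (K : Type*) [CommRing K] {V : Type*} [AddCommGroup V] [Module K V]
    (f : V → K) : Prop :=
  f ∈ Algebra.adjoin K (Set.range fun φ : Module.Dual K V => (φ : V → K))

/-- A subset of the `K`-vector space `V` is Zariski closed if it is the common zero locus of a
family of polynomial functions on `V`. -/
def IsZariskiClosed (K : Type*) [CommRing K] {V : Type*} [AddCommGroup V] [Module K V]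
    (S : Set V) : Prop :=
  ∃ T : Set (V → K), (∀ f ∈ T, IsPolyFun K f) ∧ S = {v | ∀ f ∈ T, f v = 0}

/-- The Zariski closure of a subset of the `K`-vector space `V`: the common zero locus of all
polynomial functions vanishing on the subset. -/
def zariskiClosure (K : Type*) [CommRing K] {V : Type*} [AddCommGroup V] [Module K V]
    (A : Set V) : Set V :=
  {v | ∀ f : V → K, IsPolyFun K f → (∀ a ∈ A, f a = 0) → f v = 0}


open scoped DirectSum in
lemma wtComponent_sum {K : Type*} [Field K] {V : Type*} [AddCommGroup V] [Module K V]
    {G : Type*} [Group G] (ρ : G →* V ≃ₗ[K] V) (l : Kˣ →* G)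
    (hdec : DirectSum.IsInternal fun i : ℤ => wtSpace ρ l i)
    (s : Finset ℕ) (c : ℕ → V) (hc : ∀ j : ℕ, c j ∈ wtSpace ρ l (j : ℤ))
    (h0 : 0 ∉ s → c 0 = 0) (v : V) (hv : ∑ j ∈ s, c j = v) :
    wtComponent ρ l hdec v 0 = c 0 := by
  classical
  set D : ⨁ i : ℤ, wtSpace ρ l i :=
    ∑ j ∈ s, DirectSum.of (fun i : ℤ => ↥(wtSpace ρ l i)) (j : ℤ) ⟨c j, hc j⟩ with hD
  have hFD : DirectSum.coeAddMonoidHom (fun i : ℤ => wtSpace ρ l i) D = v := by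
    rw [hD, map_sum]
    simpa [DirectSum.coeAddMonoidHom_of] using hv
  have hsymm : (Equiv.ofBijective _ hdec).symm v = D := by
    rw [Equiv.symm_apply_eq]
    exact hFD.symm
  unfold wtComponent
  rw [hsymm]
  have hDapp : (D 0 : V) =
      ∑ j ∈ s, ((DirectSum.of (fun i : ℤ => ↥(wtSpace ρ l i)) (j : ℤ) ⟨c j, hc j⟩) 0 : V) := by
    rw [hD, DFinsupp.finset_sum_apply]
    exact AddSubmonoidClass.coe_finset_sum _ _
  have hterm : ∀ j ∈ s,
      ((DirectSum.of (fun i : ℤ => ↥(wtSpace ρ l i)) (j : ℤ) ⟨c j, hc j⟩) 0 : V) =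
        if j = 0 then c 0 else 0 := by
    intro j _
    by_cases h : j = 0
    · subst h
      rw [if_pos rfl]
      exact congrArg Subtype.val
        (DirectSum.of_eq_same (β := fun i : ℤ => ↥(wtSpace ρ l i)) (0 : ℤ) ⟨c 0, hc 0⟩)
    · rw [if_neg h, DirectSum.of_eq_of_ne]
      · rfl
      · exact_mod_cast Ne.symm h
  rw [hDapp, Finset.sum_congr rfl hterm, Finset.sum_ite_eq' s 0 (fun _ => c 0)]
  by_cases h : 0 ∈ s
  · rw [if_pos h]
  · rw [if_neg h, h0 h]

lemma exists_poly_eval {K : Type*} [Field K] {M : Type*} [AddCommGroup M] [Module K M]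
    (f : M → K) (hf : IsPolyFun K f) (s : Finset ℕ) (c : ℕ → M) :
    ∃ p : Polynomial K, ∀ t : K, f (∑ j ∈ s, t ^ j • c j) = p.eval t := by
  unfold IsPolyFun at hf
  induction hf using Algebra.adjoin_induction with
  | mem φ hφ =>
    obtain ⟨ψ, rfl⟩ := hφ
    refine ⟨∑ j ∈ s, Polynomial.C (ψ (c j)) * Polynomial.X ^ j, fun t => ?_⟩
    show ψ (∑ j ∈ s, t ^ j • c j) = _
    rw [map_sum, Polynomial.eval_finset_sum]
    refine Finset.sum_congr rfl fun j _ => ?_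
    rw [map_smul, smul_eq_mul, Polynomial.eval_mul, Polynomial.eval_C,
      Polynomial.eval_pow, Polynomial.eval_X, mul_comm]
  | algebraMap r =>
    exact ⟨Polynomial.C r, fun t => by rw [Polynomial.eval_C]; rfl⟩
  | add x y hx hy ihx ihy =>
    obtain ⟨p, hp⟩ := ihx
    obtain ⟨q, hq⟩ := ihy
    exact ⟨p + q, fun t => by rw [Polynomial.eval_add, ← hp t, ← hq t]; rfl⟩
  | mul x y hx hy ihx ihy =>
    obtain ⟨p, hp⟩ := ihx
    obtain ⟨q, hq⟩ := ihy
    exact ⟨p * q, fun t => by rw [Polynomial.eval_mul, ← hp t, ← hq t]; rfl⟩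

/-- **Lemma (closed-case)**: let `W ⊆ V` be a `d`-dimensional subspace with basis
`w₁, …, w_d` and let `x = (w₁, …, w_d) ∈ X = ⊕^d V`.  If the orbit `ρ(G)x` is closed in `X`
and `λ ∈ |X,x|`, then the subspace `lim_{t→0} ρ(λ(t))W = {lim_{t→0} ρ(λ(t))v ∣ v ∈ W}` of `V`
equals `ρ(g)W` for some `g ∈ G`. -/
theorem limit_subspace_eq_translate_of_isClosed_orbit
    {K : Type*} [Field K] [IsAlgClosed K] (R : ConnectedReductiveGroup K)
    {V : Type*} [AddCommGroup V] [Module K V] [FiniteDimensional K V]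
    (ρ : R.G →* V ≃ₗ[K] V) {d : ℕ} (W : Submodule K V) (w : Fin d → V)
    (hw_indep : LinearIndependent K w)
    (hw_span : Submodule.span K (Set.range w) = W)
    (hclosed :
      zariskiClosure K (Set.range fun g : R.G => diagRep d ρ g w) =
        Set.range fun g : R.G => diagRep d ρ g w)
    (l : Kˣ →* R.G) (hl : R.IsCochar l)
    (hdecV : DirectSum.IsInternal fun i : ℤ => wtSpace ρ l i)
    (hlim : limitExists (diagRep d ρ) l w) :
    ∃ g : R.G,
      (fun v : V => wtComponent ρ l hdecV v 0) '' (W : Set V) =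
        (fun v : V => ρ g v) '' (W : Set V) := by
    classical
  obtain ⟨a, ha_mem, ha_sum⟩ := (Submodule.mem_iSup_iff_exists_finsupp _ _).mp hlim
  have ha_mem' : ∀ (j : ℕ) (i : Fin d), a j i ∈ wtSpace ρ l (j : ℤ) := by
    intro j i t
    have h := congrFun (ha_mem j t) i
    exact h
  have hwi : ∀ i : Fin d, ∑ j ∈ a.support, a j i = w i := by
    intro i
    have h := congrFun ha_sum i
    rw [Finsupp.sum] at h
    rw [← h]
    exact (Finset.sum_apply i a.support fun j => a j).symm
  have hy : ∀ i : Fin d, wtComponent ρ l hdecV (w i) 0 = a 0 i := fun i =>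
    wtComponent_sum ρ l hdecV a.support (fun j => a j i) (fun j => ha_mem' j i)
      (fun h => by
        show a 0 i = 0
        rw [Finsupp.notMem_support_iff.mp h]
        rfl) (w i) (hwi i)
  have horb : a 0 ∈ Set.range fun g : R.G => diagRep d ρ g w := by
    rw [← hclosed]
    intro f hf hvan
    obtain ⟨p, hp⟩ := exists_poly_eval f hf a.support (fun j => a j)
    have hzero : ∀ t : Kˣ, p.eval (t : K) = 0 := by
      intro t
      rw [← hp (t : K)]
      have hPt : (∑ j ∈ a.support, (t : K) ^ j • a j) = diagRep d ρ (l t) w := by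
        rw [← ha_sum, Finsupp.sum, map_sum]
        refine Finset.sum_congr rfl fun j _ => ?_
        rw [ha_mem j t]
        norm_cast
      rw [hPt]
      exact hvan _ ⟨l t, rfl⟩
    have hp0 : p = 0 := by
      apply Polynomial.eq_zero_of_infinite_isRoot
      have hinf : {x : K | x ≠ 0}.Infinite :=
        (Set.finite_singleton (0 : K)).infinite_compl
      exact Set.Infinite.mono (fun x hx => hzero (Units.mk0 x hx)) hinf
    have h0eval : f (∑ j ∈ a.support, (0 : K) ^ j • a j) = 0 := by
      rw [hp 0, hp0, Polynomial.eval_zero]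
    have hsum0 : (∑ j ∈ a.support, (0 : K) ^ j • a j) = a 0 := by
      have hterm : ∀ j ∈ a.support, (0 : K) ^ j • a j = if j = 0 then a 0 else 0 := by
        intro j _
        by_cases h : j = 0
        · subst h
          rw [if_pos rfl, pow_zero, one_smul]
        · rw [if_neg h, zero_pow h, zero_smul]
      rw [Finset.sum_congr rfl hterm, Finset.sum_ite_eq' a.support 0 (fun _ => a 0)]
      by_cases h : 0 ∈ a.support
      · rw [if_pos h]
      · rw [if_neg h, Finsupp.notMem_support_iff.mp h]
    rwa [hsum0] at h0eval
  obtain ⟨g, hg⟩ := horb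
  have hgw : ∀ i, ρ g (w i) = a 0 i := fun i => congrFun hg i
  refine ⟨g, Set.image_congr fun v hv => ?_⟩
  rw [← hw_span] at hv
  obtain ⟨tc, htc⟩ := (Submodule.mem_span_range_iff_exists_fun K).mp hv
  have hcomp : wtComponent ρ l hdecV v 0 = ∑ i, tc i • a 0 i := by
    refine wtComponent_sum ρ l hdecV a.support (fun j => ∑ i, tc i • a j i)
      (fun j => Submodule.sum_mem _ fun i _ => Submodule.smul_mem _ _ (ha_mem' j i))
      (fun h => ?_) v ?_
    · have h0 := Finsupp.notMem_support_iff.mp h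
      show ∑ i, tc i • a 0 i = 0
      rw [h0]
      simp
    · rw [Finset.sum_comm]
      have hstep : ∀ i ∈ Finset.univ, ∑ j ∈ a.support, tc i • a j i = tc i • w i :=
        fun i _ => by rw [← Finset.smul_sum, hwi i]
      rw [Finset.sum_congr rfl hstep]
      exact htc
  have hρ : ρ g v = ∑ i, tc i • a 0 i := by
    rw [← htc, map_sum]
    refine Finset.sum_congr rfl fun i _ => ?_
    rw [map_smul, hgw i]
  show wtComponent ρ l hdecV v 0 = ρ g v
  rw [hcomp, hρ]
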